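/- If two sequences (w_{σ_n}∘⋯∘w_{σ_m}(x))_{n≥m} and (w_{σ_n}∘⋯∘w_{σ_m}(x_{i(σ_m)}))_{n≥m} are started at x ∈ K_{i_0} and at prescribed points, then for every m ≤ 0 and ε > 0 there exist k ≥ m and B ∈ 𝒜_m with P^m_x(B) < ε such that for all σ ∉ B and all n ≥ k, d(Z^x_{mn}(σ), Y^{x_1...x_N}_{mn}(σ)) ≤ a^{(n−m+1)/2} d(x, x_{i_0}). -/

import Mathlib

open MeasureTheory ENNReal Filter

/-- A contractive Markov system on a metric space `K` with vertex type `V` and edge type `E`. -/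
structure CMS (E V K : Type*) [Fintype E] [MetricSpace K] [MeasurableSpace K] where
  i : E → V
  t : E → V
  Ks : V → Set K
  w : E → K → K
  p : E → K → ℝ
  a : ℝ
  ha0 : 0 < a
  ha1 : a < 1
  Ks_nonempty : ∀ v, (Ks v).Nonempty
  Ks_meas : ∀ v, MeasurableSet (Ks v)
  Ks_disj : ∀ v v', v ≠ v' → Disjoint (Ks v) (Ks v')
  Ks_cover : ∀ x : K, ∃ v, x ∈ Ks v
  w_meas : ∀ e, Measurable (w e)
  p_meas : ∀ e, Measurable (p e)
  p_nonneg : ∀ e x, 0 ≤ p e x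
  p_sum : ∀ x : K, ∑ e, p e x = 1
  p_zero : ∀ e, ∀ x ∉ Ks (i e), p e x = 0
  w_maps : ∀ e, Set.MapsTo (w e) (Ks (i e)) (Ks (t e))
  contractive : ∀ v, ∀ x ∈ Ks v, ∀ y ∈ Ks v,
      ∑ e, p e x * dist (w e x) (w e y) ≤ a * dist x y

variable {E V K : Type*} [Fintype E] [MetricSpace K] [MeasurableSpace K]

/-- `S.orbit e m x j = w_{e_{m+j}} ∘ ⋯ ∘ w_{e_m} (x)`. -/
def CMS.orbit (S : CMS E V K) (e : ℤ → E) (m : ℤ) (x : K) : ℕ → K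
  | 0 => S.w (e m) x
  | j + 1 => S.w (e (m + j + 1)) (S.orbit e m x j)

/-- `S.pathProb e m x j = p_{e_m}(x) p_{e_{m+1}}(w_{e_m}x) ⋯ p_{e_{m+j}}(w_{e_{m+j-1}}∘⋯∘w_{e_m}x)`. -/
def CMS.pathProb (S : CMS E V K) (e : ℤ → E) (m : ℤ) (x : K) : ℕ → ℝ
  | 0 => S.p (e m) x
  | j + 1 => S.pathProb e m x j * S.p (e (m + j + 1)) (S.orbit e m x j)

/-- The σ-algebra `𝒜_m` on `Σ = E^ℤ` generated by the coordinates with index `≥ m`. -/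
def Am (E : Type*) (m : ℤ) : MeasurableSpace (ℤ → E) :=
  ⨆ (i : ℤ) (_ : m ≤ i), MeasurableSpace.comap (fun σ => σ i) ⊤

/-- The cylinder `_m[e_m, …, e_{m+j}]`. -/
def cyl (m : ℤ) (j : ℕ) (e : ℤ → E) : Set (ℤ → E) :=
  {σ | ∀ k : ℤ, m ≤ k → k ≤ m + j → σ k = e k}

/-- `P` is the family of Markov measures `P^m_x` on `(Σ, 𝒜_m)` of the CMS `S`. -/
def IsKernel (S : CMS E V K) (P : ∀ m : ℤ, K → @Measure (ℤ → E) (Am E m)) : Prop :=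
  (∀ (m : ℤ) (x : K), @IsProbabilityMeasure _ (Am E m) (P m x)) ∧
  ∀ (m : ℤ) (x : K) (e : ℤ → E) (j : ℕ),
    P m x (cyl m j e) = ENNReal.ofReal (S.pathProb e m x j)

/-- The `m`-th lift `Φ_m(ν)(A) = ∫ P^m_x(A) dν(x)`. -/
noncomputable def liftMeas (P : ∀ m : ℤ, K → @Measure (ℤ → E) (Am E m))
    (m : ℤ) (ν : Measure K) (A : Set (ℤ → E)) : ℝ≥0∞ :=
  ∫⁻ x, P m x A ∂ν

/-- The lift outer measure `Φ(ν)`, via coverings `B ⊆ ⋃_{m ≤ 0} A_m`, `A_m ∈ 𝒜_m` (indexed by `m = -n`). -/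
noncomputable def PhiM (P : ∀ m : ℤ, K → @Measure (ℤ → E) (Am E m))
    (ν : Measure K) (B : Set (ℤ → E)) : ℝ≥0∞ :=
  ⨅ (A : ℕ → Set (ℤ → E)) (_ : ∀ n : ℕ, MeasurableSet[Am E (-(n : ℤ))] (A n))
    (_ : B ⊆ ⋃ n, A n), ∑' n : ℕ, liftMeas P (-(n : ℤ)) ν (A n)

/-- `Y^{x_1…x_N}_{m0}(σ) = w_{σ_0}∘⋯∘w_{σ_m}(x_{i(σ_m)})`. -/
noncomputable def CMS.Y (S : CMS E V K) (xs : V → K) (m : ℤ) (σ : ℤ → E) : K :=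
  S.orbit σ m (xs (S.i (σ m))) (-m).toNat

/-- The uniform measure `(1/N) ∑_i δ_{x_i}`. -/
noncomputable def unif [Fintype V] (xs : V → K) : Measure K :=
  ((Fintype.card V : ℝ≥0∞))⁻¹ • ∑ v : V, Measure.dirac (xs v)

/-- The measure `P^m_{x_1…x_N} = Φ_m((1/N)∑δ_{x_i}) = (1/N)∑_i P^m_{x_i}`. -/
noncomputable def PmMix [Fintype V] (P : ∀ m : ℤ, K → @Measure (ℤ → E) (Am E m))
    (xs : V → K) (m : ℤ) : @Measure (ℤ → E) (Am E m) :=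
  ((Fintype.card V : ℝ≥0∞))⁻¹ • ∑ v : V, P m (xs v)


set_option linter.unusedSectionVars false

lemma CMS.orbit_congr (S : CMS E V K) {σ τ : ℤ → E} (m : ℤ) (y : K) (j : ℕ)
    (h : ∀ k : ℤ, m ≤ k → k ≤ m + j → σ k = τ k) :
    S.orbit σ m y j = S.orbit τ m y j := by
  induction j with
  | zero => simp [CMS.orbit, h m le_rfl (by simp)]
  | succ j ih =>
    have h' : ∀ k : ℤ, m ≤ k → k ≤ m + j → σ k = τ k := fun k hk hk' =>
      h k hk (by push_cast; omega)
    simp only [CMS.orbit, ih h', h (m + j + 1) (by omega) (by push_cast; omega)]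

lemma CMS.pathProb_congr (S : CMS E V K) {σ τ : ℤ → E} (m : ℤ) (y : K) (j : ℕ)
    (h : ∀ k : ℤ, m ≤ k → k ≤ m + j → σ k = τ k) :
    S.pathProb σ m y j = S.pathProb τ m y j := by
  induction j with
  | zero => simp [CMS.pathProb, h m le_rfl (by simp)]
  | succ j ih =>
    have h' : ∀ k : ℤ, m ≤ k → k ≤ m + j → σ k = τ k := fun k hk hk' =>
      h k hk (by push_cast; omega)
    simp only [CMS.pathProb, ih h', h (m + j + 1) (by omega) (by push_cast; omega),
      S.orbit_congr m y j h']

lemma CMS.pathProb_nonneg (S : CMS E V K) (σ : ℤ → E) (m : ℤ) (y : K) (j : ℕ) :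
    0 ≤ S.pathProb σ m y j := by
  induction j with
  | zero => exact S.p_nonneg _ _
  | succ j ih => exact mul_nonneg ih (S.p_nonneg _ _)

/-- Extension of a finite pattern to a two-sided sequence. -/
def extPat (m : ℤ) (j : ℕ) (e₀ : E) (s : Fin (j + 1) → E) : ℤ → E := fun k =>
  if h : (k - m).toNat < j + 1 ∧ m ≤ k then s ⟨(k - m).toNat, h.1⟩ else e₀

lemma extPat_spec (m : ℤ) (j : ℕ) (e₀ : E) (s : Fin (j + 1) → E) {k : ℤ}
    (h1 : m ≤ k) (h2 : k ≤ m + j) :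
    extPat m j e₀ s k = s ⟨(k - m).toNat, by omega⟩ := by
  rw [extPat, dif_pos ⟨by omega, h1⟩]

/-- Every sequence agrees with the extension of its own restriction on the window. -/
lemma extPat_res (m : ℤ) (j : ℕ) (e₀ : E) (σ : ℤ → E) {k : ℤ}
    (h1 : m ≤ k) (h2 : k ≤ m + j) :
    extPat m j e₀ (fun i : Fin (j + 1) => σ (m + i)) k = σ k := by
  rw [extPat_spec m j e₀ _ h1 h2]
  show σ (m + ((k - m).toNat : ℤ)) = σ k
  congr 1
  omega

lemma mem_cyl_self (m : ℤ) (j : ℕ) (e₀ : E) (σ : ℤ → E) :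
    σ ∈ cyl m j (extPat m j e₀ (fun i : Fin (j + 1) => σ (m + i))) := by
  intro k hk hk'
  exact (extPat_res m j e₀ σ hk hk').symm

lemma cyl_measurable (m : ℤ) (j : ℕ) (e : ℤ → E) :
    MeasurableSet[Am E m] (cyl m j e) := by
  have heq : cyl m j e = ⋂ k : ℤ, {σ : ℤ → E | m ≤ k → k ≤ m + j → σ k = e k} := by
    ext σ; simp [cyl, Set.mem_iInter]
  rw [heq]
  refine MeasurableSet.iInter fun k => ?_
  by_cases h : m ≤ k ∧ k ≤ m + j
  · have hsub : MeasurableSpace.comap (fun σ : ℤ → E => σ k) ⊤ ≤ Am E m := by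
      refine le_trans ?_ (le_iSup _ k)
      exact le_iSup (fun _ : m ≤ k => MeasurableSpace.comap (fun σ : ℤ → E => σ k) ⊤) h.1
    refine hsub _ ?_
    exact ⟨{y : E | m ≤ k → k ≤ m + j → y = e k}, trivial, rfl⟩
  · have : {σ : ℤ → E | m ≤ k → k ≤ m + j → σ k = e k} = Set.univ := by
      ext σ; simp only [Set.mem_setOf_eq, Set.mem_univ, iff_true]
      intro h1 h2; exact absurd ⟨h1, h2⟩ h
    rw [this]; exact MeasurableSet.univ

/-- If the path probability is nonzero, both orbits land in `Ks (t (σ (m+j)))`. -/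
lemma key_mem (S : CMS E V K) (xs : V → K) (hxs : ∀ v, xs v ∈ S.Ks v)
    (x : K) (m : ℤ) (σ : ℤ → E) :
    ∀ j : ℕ, S.pathProb σ m x j ≠ 0 →
      S.orbit σ m x j ∈ S.Ks (S.t (σ (m + j))) ∧
      S.orbit σ m (xs (S.i (σ m))) j ∈ S.Ks (S.t (σ (m + j))) := by
  intro j
  induction j with
  | zero =>
    intro hp
    have hx' : x ∈ S.Ks (S.i (σ m)) := by
      by_contra h
      exact hp (S.p_zero _ _ h)
    constructor
    · simpa [CMS.orbit] using S.w_maps (σ m) hx'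
    · simpa [CMS.orbit] using S.w_maps (σ m) (hxs _)
  | succ j ih =>
    intro hp
    rw [CMS.pathProb] at hp
    have h1 : S.pathProb σ m x j ≠ 0 := fun h => hp (by rw [h, zero_mul])
    have h2 : S.p (σ (m + j + 1)) (S.orbit σ m x j) ≠ 0 := fun h => hp (by rw [h, mul_zero])
    obtain ⟨hz, hy⟩ := ih h1
    have hz' : S.orbit σ m x j ∈ S.Ks (S.i (σ (m + j + 1))) := by
      by_contra h
      exact h2 (S.p_zero _ _ h)
    have hvv : S.t (σ (m + j)) = S.i (σ (m + j + 1)) := by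
      by_contra h
      exact (S.Ks_disj _ _ h).ne_of_mem hz hz' rfl
    rw [← hvv] at hz'
    have hy' : S.orbit σ m (xs (S.i (σ m))) j ∈ S.Ks (S.i (σ (m + j + 1))) := hvv ▸ hy
    have hcast : (m + (j + 1 : ℕ) : ℤ) = m + j + 1 := by push_cast; omega
    rw [CMS.orbit, CMS.orbit, hcast]
    exact ⟨S.w_maps _ (hvv ▸ hz), S.w_maps _ hy'⟩


lemma sumT (S : CMS E V K) (xs : V → K) (hxs : ∀ v, xs v ∈ S.Ks v)
    (x : K) (i₀ : V) (hx : x ∈ S.Ks i₀) (m : ℤ) (e₀ : E) :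
    ∀ j : ℕ,
      ∑ s : Fin (j + 1) → E,
        S.pathProb (extPat m j e₀ s) m x j *
          dist (S.orbit (extPat m j e₀ s) m x j)
            (S.orbit (extPat m j e₀ s) m (xs (S.i (extPat m j e₀ s m))) j)
      ≤ S.a ^ (j + 1) * dist x (xs i₀) := by
  intro j
  induction j with
  | zero =>
    have hsum : ∑ s : Fin 1 → E,
        S.pathProb (extPat m 0 e₀ s) m x 0 *
          dist (S.orbit (extPat m 0 e₀ s) m x 0)
            (S.orbit (extPat m 0 e₀ s) m (xs (S.i (extPat m 0 e₀ s m))) 0)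
        = ∑ e : E, S.p e x * dist (S.w e x) (S.w e (xs (S.i e))) := by
      refine Fintype.sum_equiv (Equiv.funUnique (Fin 1) E) _ _ fun s => ?_
      have h0 : extPat m 0 e₀ s m = s 0 := by
        rw [extPat_spec m 0 e₀ s le_rfl (by omega)]
        congr 1
        ext
        simp
      simp only [CMS.pathProb, CMS.orbit, h0, Equiv.funUnique_apply,
        Fin.default_eq_zero]
    rw [hsum, pow_one]
    calc ∑ e : E, S.p e x * dist (S.w e x) (S.w e (xs (S.i e)))
        ≤ ∑ e : E, S.p e x * dist (S.w e x) (S.w e (xs i₀)) := by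
          refine Finset.sum_le_sum fun e _ => ?_
          rcases eq_or_ne (S.p e x) 0 with h | h
          · rw [h, zero_mul, zero_mul]
          · have hx' : x ∈ S.Ks (S.i e) := by
              by_contra hc; exact h (S.p_zero e x hc)
            have : S.i e = i₀ := by
              by_contra hc
              exact (S.Ks_disj _ _ hc).ne_of_mem hx' hx rfl
            rw [this]
      _ ≤ S.a * dist x (xs i₀) := S.contractive i₀ x hx (xs i₀) (hxs i₀)
  | succ j ih =>
    have key : ∀ (t : Fin (j + 1) → E) (e : E),
        S.pathProb (extPat m (j+1) e₀ (Fin.snoc t e)) m x (j+1) *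
          dist (S.orbit (extPat m (j+1) e₀ (Fin.snoc t e)) m x (j+1))
            (S.orbit (extPat m (j+1) e₀ (Fin.snoc t e)) m
              (xs (S.i (extPat m (j+1) e₀ (Fin.snoc t e) m))) (j+1))
        = S.pathProb (extPat m j e₀ t) m x j *
            (S.p e (S.orbit (extPat m j e₀ t) m x j) *
              dist (S.w e (S.orbit (extPat m j e₀ t) m x j))
                (S.w e (S.orbit (extPat m j e₀ t) m
                  (xs (S.i (extPat m j e₀ t m))) j))) := by
      intro t e
      set τ := extPat m (j+1) e₀ (Fin.snoc t e) with hτ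
      set ρ := extPat m j e₀ t with hρ
      have hagree : ∀ k : ℤ, m ≤ k → k ≤ m + (j:ℤ) → τ k = ρ k := by
        intro k h1 h2
        rw [hτ, hρ, extPat_spec _ _ _ _ h1 (by push_cast; omega),
            extPat_spec _ _ _ _ h1 h2]
        have hlt : (k - m).toNat < j + 1 := by omega
        simp [Fin.snoc, hlt]
      have htop : τ (m + (j:ℤ) + 1) = e := by
        rw [hτ, extPat_spec _ _ _ _ (by omega) (by push_cast; omega)]
        have hge : ¬ ((m + (j:ℤ) + 1 - m).toNat < j + 1) := by omega
        simp [Fin.snoc, hge]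
      have hm0 : τ m = ρ m := hagree m le_rfl (by omega)
      simp only [CMS.pathProb, CMS.orbit]
      rw [S.pathProb_congr m x j hagree, htop, hm0,
          S.orbit_congr m x j hagree,
          S.orbit_congr m (xs (S.i (ρ m))) j hagree]
      ring
    have hre : ∑ q : E × (Fin (j + 1) → E),
          (S.pathProb (extPat m (j+1) e₀ (Fin.snoc q.2 q.1)) m x (j+1) *
            dist (S.orbit (extPat m (j+1) e₀ (Fin.snoc q.2 q.1)) m x (j+1))
              (S.orbit (extPat m (j+1) e₀ (Fin.snoc q.2 q.1)) m
                (xs (S.i (extPat m (j+1) e₀ (Fin.snoc q.2 q.1) m))) (j+1)))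
        = ∑ s : Fin (j + 1 + 1) → E,
          S.pathProb (extPat m (j+1) e₀ s) m x (j+1) *
            dist (S.orbit (extPat m (j+1) e₀ s) m x (j+1))
              (S.orbit (extPat m (j+1) e₀ s) m
                (xs (S.i (extPat m (j+1) e₀ s m))) (j+1)) :=
      Fintype.sum_equiv (Fin.snocEquiv fun _ => E) _ _ (fun q => rfl)
    rw [← hre, Fintype.sum_prod_type]
    have hswap := Finset.sum_comm (s := (Finset.univ : Finset E))
      (t := (Finset.univ : Finset (Fin (j + 1) → E)))
      (f := fun e t =>
        S.pathProb (extPat m (j+1) e₀ (Fin.snoc t e)) m x (j+1) *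
          dist (S.orbit (extPat m (j+1) e₀ (Fin.snoc t e)) m x (j+1))
            (S.orbit (extPat m (j+1) e₀ (Fin.snoc t e)) m
              (xs (S.i (extPat m (j+1) e₀ (Fin.snoc t e) m))) (j+1)))
    rw [hswap]
    calc ∑ t : Fin (j + 1) → E, ∑ e : E,
          S.pathProb (extPat m (j+1) e₀ (Fin.snoc t e)) m x (j+1) *
            dist (S.orbit (extPat m (j+1) e₀ (Fin.snoc t e)) m x (j+1))
              (S.orbit (extPat m (j+1) e₀ (Fin.snoc t e)) m
                (xs (S.i (extPat m (j+1) e₀ (Fin.snoc t e) m))) (j+1))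
        ≤ ∑ t : Fin (j + 1) → E,
            S.a * (S.pathProb (extPat m j e₀ t) m x j *
              dist (S.orbit (extPat m j e₀ t) m x j)
                (S.orbit (extPat m j e₀ t) m (xs (S.i (extPat m j e₀ t m))) j)) := by
          refine Finset.sum_le_sum fun t _ => ?_
          rw [Finset.sum_congr rfl (fun e _ => key t e), ← Finset.mul_sum]
          rcases eq_or_ne (S.pathProb (extPat m j e₀ t) m x j) 0 with h0 | h0
          · simp [h0]
          · obtain ⟨hz, hy⟩ := key_mem S xs hxs x m (extPat m j e₀ t) j h0
            have hc := S.contractive _ _ hz _ hy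
            calc S.pathProb (extPat m j e₀ t) m x j *
                  ∑ e : E, S.p e (S.orbit (extPat m j e₀ t) m x j) *
                    dist (S.w e (S.orbit (extPat m j e₀ t) m x j))
                      (S.w e (S.orbit (extPat m j e₀ t) m
                        (xs (S.i (extPat m j e₀ t m))) j))
                ≤ S.pathProb (extPat m j e₀ t) m x j *
                    (S.a * dist (S.orbit (extPat m j e₀ t) m x j)
                      (S.orbit (extPat m j e₀ t) m
                        (xs (S.i (extPat m j e₀ t m))) j)) :=
                  mul_le_mul_of_nonneg_left hc (S.pathProb_nonneg _ _ _ _)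
              _ = _ := by ring
      _ = S.a * ∑ t : Fin (j + 1) → E,
            S.pathProb (extPat m j e₀ t) m x j *
              dist (S.orbit (extPat m j e₀ t) m x j)
                (S.orbit (extPat m j e₀ t) m (xs (S.i (extPat m j e₀ t m))) j) := by
          rw [Finset.mul_sum]
      _ ≤ S.a * (S.a ^ (j + 1) * dist x (xs i₀)) :=
          mul_le_mul_of_nonneg_left ih S.ha0.le
      _ = S.a ^ (j + 1 + 1) * dist x (xs i₀) := by ring


open Classical in
/-- Patterns of length `j+1` along which the two orbits are further apart than `√a^(j+1) d`. -/
noncomputable def badSet (S : CMS E V K) (xs : V → K) (x : K) (i₀ : V) (m : ℤ) (e₀ : E)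
    (j : ℕ) : Finset (Fin (j + 1) → E) :=
  Finset.univ.filter (fun s =>
    Real.sqrt S.a ^ (j + 1) * dist x (xs i₀) <
      dist (S.orbit (extPat m j e₀ s) m x j)
        (S.orbit (extPat m j e₀ s) m (xs (S.i (extPat m j e₀ s m))) j))

/-- The bad event at time `j`. -/
noncomputable def badC (S : CMS E V K) (xs : V → K) (x : K) (i₀ : V) (m : ℤ) (e₀ : E)
    (j : ℕ) : Set (ℤ → E) :=
  ⋃ s ∈ badSet S xs x i₀ m e₀ j, cyl m j (extPat m j e₀ s)

lemma badC_meas (S : CMS E V K) (xs : V → K) (x : K) (i₀ : V) (m : ℤ) (e₀ : E) (j : ℕ) :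
    MeasurableSet[Am E m] (badC S xs x i₀ m e₀ j) :=
  MeasurableSet.biUnion (Finset.countable_toSet _) fun s _ => cyl_measurable m j _

lemma badC_bound (S : CMS E V K) (P : ∀ m : ℤ, K → @Measure (ℤ → E) (Am E m))
    (hP : IsKernel S P) (xs : V → K) (hxs : ∀ v, xs v ∈ S.Ks v)
    (x : K) (i₀ : V) (hx : x ∈ S.Ks i₀) (hd : dist x (xs i₀) ≠ 0)
    (m : ℤ) (e₀ : E) (j : ℕ) :
    P m x (badC S xs x i₀ m e₀ j) ≤ ENNReal.ofReal (Real.sqrt S.a ^ (j + 1)) := by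
  have hdpos : 0 < dist x (xs i₀) := dist_nonneg.lt_of_ne (Ne.symm hd)
  have hr0 : 0 < Real.sqrt S.a := Real.sqrt_pos.mpr S.ha0
  calc P m x (badC S xs x i₀ m e₀ j)
      ≤ ∑ s ∈ badSet S xs x i₀ m e₀ j, P m x (cyl m j (extPat m j e₀ s)) :=
        measure_biUnion_finset_le _ _
    _ = ∑ s ∈ badSet S xs x i₀ m e₀ j,
          ENNReal.ofReal (S.pathProb (extPat m j e₀ s) m x j) :=
        Finset.sum_congr rfl fun s _ => hP.2 m x _ j
    _ = ENNReal.ofReal (∑ s ∈ badSet S xs x i₀ m e₀ j,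
          S.pathProb (extPat m j e₀ s) m x j) :=
        (ENNReal.ofReal_sum_of_nonneg fun s _ => S.pathProb_nonneg _ _ _ _).symm
    _ ≤ ENNReal.ofReal (Real.sqrt S.a ^ (j + 1)) := by
        refine ENNReal.ofReal_le_ofReal ?_
        have hmul : (∑ s ∈ badSet S xs x i₀ m e₀ j, S.pathProb (extPat m j e₀ s) m x j)
              * (Real.sqrt S.a ^ (j + 1) * dist x (xs i₀))
            ≤ Real.sqrt S.a ^ (j + 1) * (Real.sqrt S.a ^ (j + 1) * dist x (xs i₀)) := by
          calc (∑ s ∈ badSet S xs x i₀ m e₀ j, S.pathProb (extPat m j e₀ s) m x j)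
                * (Real.sqrt S.a ^ (j + 1) * dist x (xs i₀))
              = ∑ s ∈ badSet S xs x i₀ m e₀ j, S.pathProb (extPat m j e₀ s) m x j
                  * (Real.sqrt S.a ^ (j + 1) * dist x (xs i₀)) := by rw [Finset.sum_mul]
            _ ≤ ∑ s ∈ badSet S xs x i₀ m e₀ j, S.pathProb (extPat m j e₀ s) m x j
                  * dist (S.orbit (extPat m j e₀ s) m x j)
                    (S.orbit (extPat m j e₀ s) m (xs (S.i (extPat m j e₀ s m))) j) := by
                refine Finset.sum_le_sum fun s hs => ?_
                refine mul_le_mul_of_nonneg_left ?_ (S.pathProb_nonneg _ _ _ _)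
                exact le_of_lt (Finset.mem_filter.mp hs).2
            _ ≤ ∑ s : Fin (j + 1) → E, S.pathProb (extPat m j e₀ s) m x j
                  * dist (S.orbit (extPat m j e₀ s) m x j)
                    (S.orbit (extPat m j e₀ s) m (xs (S.i (extPat m j e₀ s m))) j) := by
                refine Finset.sum_le_sum_of_subset_of_nonneg (Finset.subset_univ _)
                  fun s _ _ => mul_nonneg (S.pathProb_nonneg _ _ _ _) dist_nonneg
            _ ≤ S.a ^ (j + 1) * dist x (xs i₀) := sumT S xs hxs x i₀ hx m e₀ j
            _ = Real.sqrt S.a ^ (j + 1) * (Real.sqrt S.a ^ (j + 1) * dist x (xs i₀)) := by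
                have hsq : S.a ^ (j + 1)
                    = Real.sqrt S.a ^ (j + 1) * Real.sqrt S.a ^ (j + 1) := by
                  rw [← mul_pow, Real.mul_self_sqrt S.ha0.le]
                rw [hsq]; ring
        exact le_of_mul_le_mul_right hmul (by positivity)

lemma badC_notmem (S : CMS E V K) (xs : V → K) (x : K) (i₀ : V) (m : ℤ) (e₀ : E) (j : ℕ)
    (σ : ℤ → E) (hσ : σ ∉ badC S xs x i₀ m e₀ j) :
    dist (S.orbit σ m x j) (S.orbit σ m (xs (S.i (σ m))) j) ≤
      Real.sqrt S.a ^ (j + 1) * dist x (xs i₀) := by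
  set s : Fin (j + 1) → E := fun i => σ (m + i) with hs
  have hagree : ∀ k : ℤ, m ≤ k → k ≤ m + (j : ℤ) → extPat m j e₀ s k = σ k :=
    fun k h1 h2 => extPat_res m j e₀ σ h1 h2
  have hnot : s ∉ badSet S xs x i₀ m e₀ j :=
    fun hb => hσ (Set.mem_biUnion hb (mem_cyl_self m j e₀ σ))
  by_contra hcon
  push_neg at hcon
  apply hnot
  rw [badSet, Finset.mem_filter]
  refine ⟨Finset.mem_univ _, ?_⟩
  have h1 : S.orbit (extPat m j e₀ s) m x j = S.orbit σ m x j := S.orbit_congr m x j hagree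
  have hm0 : extPat m j e₀ s m = σ m := hagree m le_rfl (by omega)
  have h2 : S.orbit (extPat m j e₀ s) m (xs (S.i (extPat m j e₀ s m))) j
      = S.orbit σ m (xs (S.i (σ m))) j := by
    rw [hm0]
    exact S.orbit_congr m _ j hagree
  rw [h1, h2]
  exact hcon


/-- for every `m ≤ 0` and `ε > 0` there are `k ≥ m` and `B ∈ 𝒜_m` with
`P^m_x(B) < ε` such that off `B`, for all `n ≥ k`,
`d(Z^x_{mn}(σ), Y^{x_1…x_N}_{mn}(σ)) ≤ a^{(n-m+1)/2} d(x, x_{i₀})`. -/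
theorem statement7 {E V K : Type*} [Fintype E] [Fintype V] [MetricSpace K] [CompleteSpace K]
    [MeasurableSpace K] [BorelSpace K] (S : CMS E V K)
    (P : ∀ m : ℤ, K → @Measure (ℤ → E) (Am E m)) (hP : IsKernel S P)
    (xs : V → K) (hxs : ∀ v, xs v ∈ S.Ks v)
    (x : K) (i₀ : V) (hx : x ∈ S.Ks i₀) :
    ∀ m : ℤ, m ≤ 0 → ∀ ε : ℝ, 0 < ε →
      ∃ k : ℤ, m ≤ k ∧ ∃ B : Set (ℤ → E), MeasurableSet[Am E m] B ∧
        P m x B < ENNReal.ofReal ε ∧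
        ∀ σ : ℤ → E, σ ∉ B → ∀ n : ℤ, k ≤ n →
          dist (S.orbit σ m x (n - m).toNat)
              (S.orbit σ m (xs (S.i (σ m))) (n - m).toNat) ≤
            Real.sqrt S.a ^ (n - m + 1).toNat * dist x (xs i₀) := by
  classical
  intro m hm ε hε
  obtain ⟨e₀⟩ : Nonempty E := by
    rcases isEmpty_or_nonempty E with h | h
    · have h1 := S.p_sum x
      rw [Finset.univ_eq_empty, Finset.sum_empty] at h1
      norm_num at h1
    · exact h
  have hr0 : 0 < Real.sqrt S.a := Real.sqrt_pos.mpr S.ha0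
  have hr1 : Real.sqrt S.a < 1 := by
    rw [show (1:ℝ) = Real.sqrt 1 by simp]
    exact Real.sqrt_lt_sqrt S.ha0.le S.ha1
  by_cases hd : dist x (xs i₀) = 0
  · -- degenerate case: x = xs i₀
    refine ⟨m, le_rfl,
      ⋃ e ∈ Finset.univ.filter (fun e : E => S.i e ≠ i₀), cyl m 0 (fun _ => e), ?_, ?_, ?_⟩
    · exact MeasurableSet.biUnion (Finset.countable_toSet _) fun e _ => cyl_measurable m 0 _
    · refine lt_of_le_of_lt ?_ (ENNReal.ofReal_pos.mpr hε)
      calc P m x (⋃ e ∈ Finset.univ.filter (fun e : E => S.i e ≠ i₀), cyl m 0 (fun _ => e))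
          ≤ ∑ e ∈ Finset.univ.filter (fun e : E => S.i e ≠ i₀),
              P m x (cyl m 0 (fun _ => e)) := measure_biUnion_finset_le _ _
        _ ≤ 0 := by
            refine le_of_eq (Finset.sum_eq_zero fun e he => ?_)
            rw [hP.2 m x _ 0]
            have hp0 : S.p e x = 0 := by
              refine S.p_zero e x fun hmem => ?_
              exact (S.Ks_disj _ _ (Finset.mem_filter.mp he).2).ne_of_mem hmem hx rfl
            simp [CMS.pathProb, hp0]
    · intro σ hσ n hn
      have hi : S.i (σ m) = i₀ := by
        by_contra h
        refine hσ (Set.mem_biUnion (Finset.mem_filter.mpr ⟨Finset.mem_univ _, h⟩) ?_)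
        intro k h1 h2
        have hk : k = m := by omega
        subst hk; rfl
      have hxeq : xs (S.i (σ m)) = x := by
        rw [hi]; exact (dist_eq_zero.mp hd).symm
      simp [hxeq, hd]
  · -- main case
    have hdpos : 0 < dist x (xs i₀) := dist_nonneg.lt_of_ne (Ne.symm hd)
    have htend : Filter.Tendsto (fun n : ℕ => Real.sqrt S.a ^ n) atTop (nhds 0) :=
      tendsto_pow_atTop_nhds_zero_of_lt_one hr0.le hr1
    have hpos' : 0 < ε * (1 - Real.sqrt S.a) := by nlinarith
    obtain ⟨J, hJ⟩ := (htend.eventually (gt_mem_nhds hpos')).exists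
    have hJ1 : Real.sqrt S.a ^ (J + 1) < ε * (1 - Real.sqrt S.a) :=
      lt_of_le_of_lt (pow_le_pow_of_le_one hr0.le hr1.le (Nat.le_succ J)) hJ
    refine ⟨m + J, by omega, ⋃ n : ℕ, badC S xs x i₀ m e₀ (J + n), ?_, ?_, ?_⟩
    · exact MeasurableSet.iUnion fun n => badC_meas S xs x i₀ m e₀ (J + n)
    · calc P m x (⋃ n : ℕ, badC S xs x i₀ m e₀ (J + n))
          ≤ ∑' n : ℕ, P m x (badC S xs x i₀ m e₀ (J + n)) := measure_iUnion_le _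
        _ ≤ ∑' n : ℕ, ENNReal.ofReal (Real.sqrt S.a ^ (J + n + 1)) :=
            ENNReal.tsum_le_tsum fun n => badC_bound S P hP xs hxs x i₀ hx hd m e₀ (J + n)
        _ = ∑' n : ℕ, ENNReal.ofReal (Real.sqrt S.a ^ (J + 1)) * ENNReal.ofReal (Real.sqrt S.a) ^ n := by
            refine tsum_congr fun n => ?_
            rw [← ENNReal.ofReal_pow hr0.le, ← ENNReal.ofReal_mul (by positivity), ← pow_add]
            ring_nf
        _ = ENNReal.ofReal (Real.sqrt S.a ^ (J + 1)) * (1 - ENNReal.ofReal (Real.sqrt S.a))⁻¹ := by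
            rw [ENNReal.tsum_mul_left, ENNReal.tsum_geometric]
        _ < ENNReal.ofReal ε := by
            rw [← ENNReal.ofReal_one, ← ENNReal.ofReal_sub _ hr0.le, ← div_eq_mul_inv]
            rw [ENNReal.div_lt_iff (Or.inl (by simp only [ne_eq, ENNReal.ofReal_eq_zero, not_le]; linarith)) (Or.inl ENNReal.ofReal_ne_top)]
            rw [← ENNReal.ofReal_mul hε.le]
            exact (ENNReal.ofReal_lt_ofReal_iff hpos').mpr hJ1
    · intro σ hσ n hn
      have hjJ : J ≤ (n - m).toNat := by omega
      have hσC : σ ∉ badC S xs x i₀ m e₀ (n - m).toNat := by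
        intro h
        refine hσ (Set.mem_iUnion.mpr ⟨(n - m).toNat - J, ?_⟩)
        have : J + ((n - m).toNat - J) = (n - m).toNat := by omega
        rw [this]
        exact h
      have hkey := badC_notmem S xs x i₀ m e₀ (n - m).toNat σ hσC
      have hnm : (n - m + 1).toNat = (n - m).toNat + 1 := by omega
      rw [hnm]
      exact hkey
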